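/- The following hold: (1) S is closed in U and has empty interior in U; (2) for every s₁ ∈ U there exist an open neighborhood V ⊆ U of s₁ and a holomorphic function f : V → ℂ, not identically zero, such that S ∩ V = f⁻¹(0) (so S is a complex analytic variety of codimension 1 in U); (3) the map defined on U ∖ S sending s to the (continuous linear) inverse P(s)⁻¹ ∈ L(F, E) is analytic on U ∖ S. -/

import Mathlib

open Function Set Metric ContinuousLinearMap


private lemma analyticAt_clm_comp {X A B C : Type*}
    [NormedAddCommGroup X] [NormedSpace ℂ X]
    [NormedAddCommGroup A] [NormedSpace ℂ A]
    [NormedAddCommGroup B] [NormedSpace ℂ B]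
    [NormedAddCommGroup C] [NormedSpace ℂ C]
    {f : X → B →L[ℂ] C} {g : X → A →L[ℂ] B} {x : X}
    (hf : AnalyticAt ℂ f x) (hg : AnalyticAt ℂ g x) :
    AnalyticAt ℂ (fun y => (f y).comp (g y)) x :=
  ((ContinuousLinearMap.compL ℂ A B C).analyticAt_bilinear (f x, g x)).comp₂ hf hg

private lemma local_inverse {X G H : Type*}
    [NormedAddCommGroup X] [NormedSpace ℂ X]
    [NormedAddCommGroup G] [NormedSpace ℂ G] [CompleteSpace G]
    [NormedAddCommGroup H] [NormedSpace ℂ H] [CompleteSpace H]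
    {U : Set X} (hUopen : IsOpen U) {P : X → G →L[ℂ] H} (hP : AnalyticOnNhd ℂ P U)
    {x : X} (hx : x ∈ U) (hb : Function.Bijective (P x)) :
    ∃ r : ℝ, 0 < r ∧ ball x r ⊆ U ∧ ∃ Ω : X → H →L[ℂ] G, AnalyticOnNhd ℂ Ω (ball x r) ∧
      ∀ s ∈ ball x r, (P s).comp (Ω s) = ContinuousLinearMap.id ℂ H ∧
        (Ω s).comp (P s) = ContinuousLinearMap.id ℂ G := by
  have hker : LinearMap.ker (P x : G →ₗ[ℂ] H) = ⊥ := LinearMap.ker_eq_bot.mpr hb.1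
  have hrg : LinearMap.range (P x : G →ₗ[ℂ] H) = ⊤ := LinearMap.range_eq_top.mpr hb.2
  let e := ContinuousLinearEquiv.ofBijective (P x) hker hrg
  have hecoe : ∀ z, e z = P x z := fun z => rfl
  set Ψ : X → H →L[ℂ] H := fun s => (P s).comp (e.symm : H →L[ℂ] G) with hΨdef
  have hΨan : ∀ s ∈ U, AnalyticAt ℂ Ψ s := fun s hs =>
    analyticAt_clm_comp (hP s hs) analyticAt_const
  have hΨx : IsUnit (Ψ x) := by
    have : Ψ x = 1 := by
      ext z
      have : (P x) (e.symm z) = e (e.symm z) := rfl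
      simp [Ψ, this]
    rw [this]; exact isUnit_one
  have hcont : ContinuousAt Ψ x := (hΨan x hx).continuousAt
  have hmem : {s : X | IsUnit (Ψ s)} ∩ U ∈ nhds x := by
    refine Filter.inter_mem ?_ (hUopen.mem_nhds hx)
    exact hcont.preimage_mem_nhds (Units.isOpen.mem_nhds hΨx)
  obtain ⟨r, hr, hball⟩ := Metric.mem_nhds_iff.mp hmem
  refine ⟨r, hr, fun s hs => (hball hs).2, fun s => (e.symm : H →L[ℂ] G).comp (Ring.inverse (Ψ s)), ?_, ?_⟩
  · intro s hs
    have hu : IsUnit (Ψ s) := (hball hs).1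
    have h1 : AnalyticAt ℂ Ring.inverse (Ψ s) := by
      have := analyticAt_inverse (𝕜 := ℂ) hu.unit
      rwa [hu.unit_spec] at this
    exact analyticAt_clm_comp analyticAt_const (h1.comp (hΨan s (hball hs).2))
  · intro s hs
    have hu : IsUnit (Ψ s) := (hball hs).1
    have hmul : Ψ s * Ring.inverse (Ψ s) = 1 := Ring.mul_inverse_cancel _ hu
    have hmul' : Ring.inverse (Ψ s) * Ψ s = 1 := Ring.inverse_mul_cancel _ hu
    constructor
    · ext z
      simp only [ContinuousLinearMap.coe_comp', Function.comp_apply,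
        ContinuousLinearMap.coe_id', id_eq]
      have h3 : (P s) ((e.symm : H →L[ℂ] G) (Ring.inverse (Ψ s) z)) =
          Ψ s (Ring.inverse (Ψ s) z) := rfl
      rw [h3, ← ContinuousLinearMap.mul_apply, hmul, ContinuousLinearMap.one_apply]
    · ext z
      simp only [ContinuousLinearMap.coe_comp', Function.comp_apply,
        ContinuousLinearMap.coe_id', id_eq]
      have h2 : P s z = Ψ s (e z) := by
        have h4 : Ψ s (e z) = P s (e.symm (e z)) := rfl
        rw [h4, e.symm_apply_apply]
      rw [h2, ← ContinuousLinearMap.mul_apply, hmul', ContinuousLinearMap.one_apply]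
      show e.symm (e z) = z
      rw [e.symm_apply_apply]


private lemma block_iff {E M F N : Type*}
    [NormedAddCommGroup E] [NormedSpace ℂ E] [NormedAddCommGroup M] [NormedSpace ℂ M]
    [NormedAddCommGroup F] [NormedSpace ℂ F] [NormedAddCommGroup N] [NormedSpace ℂ N]
    (A : E →L[ℂ] F) (i : M →L[ℂ] F) (p : E →L[ℂ] N)
    (Θ : (E × M) →L[ℂ] (F × N)) (Ω : (F × N) →L[ℂ] (E × M))
    (hΘ : ∀ x m, Θ (x, m) = (A x + i m, p x))
    (h1 : ∀ z, Ω (Θ z) = z) (h2 : ∀ w, Θ (Ω w) = w) :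
    Function.Bijective A ↔ Function.Bijective (fun ν : N => (Ω (0, ν)).2) := by
  set Δ : N → M := fun ν => (Ω (0, ν)).2 with hΔ
  have hΔ0 : Δ 0 = 0 := by
    have : ((0 : F), (0 : N)) = (0 : F × N) := rfl
    simp [Δ, this]
  constructor
  · rintro ⟨hinj, hsurj⟩
    constructor
    · -- Δ injective
      intro ν ν' hνν'
      -- reduce to: Δ ν = 0 → ν = 0
      suffices hz : ∀ ν : N, Δ ν = 0 → ν = 0 by
        have hsub : Δ (ν - ν') = 0 := by
          have : Ω (0, ν - ν') = Ω (0, ν) - Ω (0, ν') := by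
            rw [← map_sub]; congr 1; simp [Prod.ext_iff]
          simp only [Δ, this, Prod.snd_sub]
          exact sub_eq_zero.mpr hνν'
        have := hz _ hsub
        exact sub_eq_zero.mp this
      intro ν hν
      have hw := h2 (0, ν)
      have hΩν : Ω (0, ν) = ((Ω (0, ν)).1, (0 : M)) := by
        rw [Prod.ext_iff]; exact ⟨rfl, hν⟩
      rw [hΩν, hΘ, Prod.mk.injEq] at hw
      obtain ⟨hw1, hw2⟩ := hw
      simp only [map_zero, add_zero] at hw1
      have hx0 : (Ω (0, ν)).1 = 0 := hinj (by rw [hw1, map_zero])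
      rw [hx0, map_zero] at hw2
      exact hw2.symm
    · -- Δ surjective
      intro m
      obtain ⟨x, hx⟩ := hsurj (-(i m))
      have hθ : Θ (x, m) = (0, p x) := by rw [hΘ, hx]; simp
      have hΩ : Ω (0, p x) = (x, m) := by rw [← hθ, h1]
      exact ⟨p x, by simp [Δ, hΩ]⟩
  · rintro ⟨hinj, hsurj⟩
    constructor
    · -- A injective
      intro a b hab
      suffices hz : ∀ x : E, A x = 0 → x = 0 by
        have : A (a - b) = 0 := by rw [map_sub, hab, sub_self]
        exact sub_eq_zero.mp (hz _ this)
      intro x hx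
      have hθ : Θ (x, 0) = (0, p x) := by rw [hΘ]; simp [hx]
      have hΩ : Ω (0, p x) = (x, 0) := by rw [← hθ, h1]
      have hΔpx : Δ (p x) = 0 := by simp [Δ, hΩ]
      have hpx : p x = 0 := hinj (by rw [hΔpx, hΔ0])
      rw [hpx] at hΩ
      have : ((0 : F), (0 : N)) = (0 : F × N) := rfl
      rw [this, map_zero] at hΩ
      have := congrArg Prod.fst hΩ
      exact this.symm
    · -- A surjective
      intro y
      set x := (Ω (y, 0)).1 with hxdef
      set m := (Ω (y, 0)).2 with hmdef
      have hw := h2 (y, 0)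
      have : Ω (y, 0) = (x, m) := rfl
      rw [this, hΘ, Prod.mk.injEq] at hw
      obtain ⟨hw1, hw2⟩ := hw
      obtain ⟨ν, hν⟩ := hsurj (-m)
      set x' := (Ω (0, ν)).1 with hx'def
      have hw' := h2 (0, ν)
      have hΩ' : Ω (0, ν) = (x', Δ ν) := rfl
      rw [hΩ', hΘ, Prod.mk.injEq] at hw'
      obtain ⟨hw1', _⟩ := hw'
      refine ⟨x + x', ?_⟩
      have hAx' : A x' = - i (Δ ν) := by
        rw [add_eq_zero_iff_eq_neg] at hw1'
        exact hw1'
      rw [map_add, hAx', hν, map_neg, neg_neg]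
      exact hw1
private lemma core_lemma {E F : Type*}
    [NormedAddCommGroup E] [NormedSpace ℂ E] [CompleteSpace E]
    [NormedAddCommGroup F] [NormedSpace ℂ F] [CompleteSpace F] {n : ℕ}
    {U : Set (Fin n → ℂ)} (hUopen : IsOpen U)
    {P : (Fin n → ℂ) → (E →L[ℂ] F)} (hP : AnalyticOnNhd ℂ P U)
    {s₁ : Fin n → ℂ} (hs₁ : s₁ ∈ U)
    (h1 : FiniteDimensional ℂ (LinearMap.ker (P s₁ : E →ₗ[ℂ] F)))
    (h2 : FiniteDimensional ℂ (F ⧸ LinearMap.range (P s₁ : E →ₗ[ℂ] F))) :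
    ∃ V : Set (Fin n → ℂ), IsOpen V ∧ s₁ ∈ V ∧ V ⊆ U ∧ IsPreconnected V ∧
      ∃ (N : Submodule ℂ E) (M : Submodule ℂ F),
        FiniteDimensional ℂ N ∧ FiniteDimensional ℂ M ∧
        ∃ Δ : (Fin n → ℂ) → (N →L[ℂ] M), AnalyticOnNhd ℂ Δ V ∧
          ∀ s ∈ V, (Function.Bijective (P s) ↔ Function.Bijective (Δ s)) := by
  classical
  set N : Submodule ℂ E := LinearMap.ker (P s₁ : E →ₗ[ℂ] F) with hNdef
  haveI : FiniteDimensional ℂ N := h1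
  have hNc : N.ClosedComplemented := Submodule.ClosedComplemented.of_finiteDimensional N
  obtain ⟨π, hπ⟩ := hNc
  obtain ⟨M, hM⟩ := Submodule.exists_isCompl (LinearMap.range (P s₁ : E →ₗ[ℂ] F))
  haveI : FiniteDimensional ℂ M := by
    have e := Submodule.quotientEquivOfIsCompl _ M hM
    exact FiniteDimensional.of_injective e.symm.toLinearMap e.symm.injective
  haveI : CompleteSpace M := FiniteDimensional.complete ℂ M
  haveI : CompleteSpace N := FiniteDimensional.complete ℂ N
  set Θ : (Fin n → ℂ) → (E × M) →L[ℂ] (F × N) := fun s =>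
    (ContinuousLinearMap.inl ℂ F N).comp ((P s).comp (ContinuousLinearMap.fst ℂ E M) +
      M.subtypeL.comp (ContinuousLinearMap.snd ℂ E M)) +
    (ContinuousLinearMap.inr ℂ F N).comp (π.comp (ContinuousLinearMap.fst ℂ E M)) with hΘdef
  have hΘapp : ∀ s x m, Θ s (x, m) = (P s x + (m : F), π x) := by
    intro s x m
    simp only [hΘdef, ContinuousLinearMap.add_apply, ContinuousLinearMap.comp_apply,
      ContinuousLinearMap.inl_apply, ContinuousLinearMap.inr_apply,
      ContinuousLinearMap.coe_fst', ContinuousLinearMap.coe_snd', Prod.mk_add_mk,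
      add_zero, zero_add, Submodule.subtypeL_apply]
  have hΘan : AnalyticOnNhd ℂ Θ U := by
    intro s hs
    have ha : AnalyticAt ℂ (fun s' => (P s').comp (ContinuousLinearMap.fst ℂ E M)) s :=
      analyticAt_clm_comp (hP s hs) analyticAt_const
    have hb : AnalyticAt ℂ (fun s' => (P s').comp (ContinuousLinearMap.fst ℂ E M) +
        M.subtypeL.comp (ContinuousLinearMap.snd ℂ E M)) s := by
      have heq : (fun s' => (P s').comp (ContinuousLinearMap.fst ℂ E M) +
          M.subtypeL.comp (ContinuousLinearMap.snd ℂ E M)) =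
          (fun s' => (P s').comp (ContinuousLinearMap.fst ℂ E M)) +
          (fun _ => M.subtypeL.comp (ContinuousLinearMap.snd ℂ E M)) := rfl
      rw [heq]
      exact ha.add analyticAt_const
    have hc : AnalyticAt ℂ (fun s' => (ContinuousLinearMap.inl ℂ F N).comp
        ((P s').comp (ContinuousLinearMap.fst ℂ E M) +
          M.subtypeL.comp (ContinuousLinearMap.snd ℂ E M))) s :=
      analyticAt_clm_comp analyticAt_const hb
    have heq2 : Θ = (fun s' => (ContinuousLinearMap.inl ℂ F N).comp
        ((P s').comp (ContinuousLinearMap.fst ℂ E M) +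
          M.subtypeL.comp (ContinuousLinearMap.snd ℂ E M))) +
        (fun _ => (ContinuousLinearMap.inr ℂ F N).comp
          (π.comp (ContinuousLinearMap.fst ℂ E M))) := rfl
    rw [heq2]
    exact hc.add analyticAt_const
  have hΘbij : Function.Bijective (Θ s₁) := by
    constructor
    · intro a b hab
      suffices hz : ∀ z : E × M, Θ s₁ z = 0 → z = 0 by
        have : Θ s₁ (a - b) = 0 := by rw [map_sub, hab, sub_self]
        exact sub_eq_zero.mp (hz _ this)
      rintro ⟨x, m⟩ hz
      rw [hΘapp, Prod.mk.injEq] at hz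
      obtain ⟨hz1, hz2⟩ := hz
      have hPx : P s₁ x ∈ LinearMap.range (P s₁ : E →ₗ[ℂ] F) ⊓ M := by
        refine ⟨LinearMap.mem_range_self _ x, ?_⟩
        have : P s₁ x = -(m : F) := by rw [eq_neg_iff_add_eq_zero]; exact hz1
        rw [this]
        exact M.neg_mem m.2
      rw [hM.inf_eq_bot, Submodule.mem_bot] at hPx
      have hxN : x ∈ N := by rwa [hNdef, LinearMap.mem_ker]
      have hm0 : (m : F) = 0 := by
        have : (m : F) = -(P s₁ x) := by rw [eq_neg_iff_add_eq_zero, add_comm]; exact hz1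
        rw [this, hPx, neg_zero]
      have hx0 : x = 0 := by
        have := hπ ⟨x, hxN⟩
        rw [hz2] at this
        have := congrArg (Subtype.val) this
        simpa using this.symm
      rw [Prod.mk.injEq]
      exact ⟨hx0, Subtype.ext hm0⟩
    · rintro ⟨y, ν⟩
      have hy : y ∈ LinearMap.range (P s₁ : E →ₗ[ℂ] F) ⊔ M := by rw [hM.sup_eq_top]; trivial
      rw [Submodule.mem_sup] at hy
      obtain ⟨r, hr, m, hm, hrm⟩ := hy
      obtain ⟨x₀, hx₀⟩ := hr
      set x : E := x₀ - (π x₀ : E) + (ν : E) with hxdef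
      have hker : ∀ w : N, P s₁ (w : E) = 0 := fun w => LinearMap.mem_ker.mp w.2
      refine ⟨(x, ⟨m, hm⟩), ?_⟩
      rw [hΘapp, Prod.mk.injEq]
      constructor
      · have : P s₁ x = r := by
          rw [hxdef, map_add, map_sub, hker (π x₀), hker ν, sub_zero, add_zero]; exact hx₀
        rw [this, hrm]
      · rw [hxdef, map_add, map_sub, hπ ν]
        have : π ((π x₀ : N) : E) = π x₀ := hπ (π x₀)
        rw [this, sub_self, zero_add]
  obtain ⟨r, hr, hballU, Ω, hΩan, hΩinv⟩ := local_inverse hUopen hΘan hs₁ hΘbij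
  refine ⟨ball s₁ r, isOpen_ball, mem_ball_self hr, hballU, (convex_ball s₁ r).isPreconnected,
    N, M, h1, inferInstance, ?_⟩
  set Δ : (Fin n → ℂ) → (N →L[ℂ] M) := fun s =>
    (ContinuousLinearMap.snd ℂ E M).comp ((Ω s).comp (ContinuousLinearMap.inr ℂ F N)) with hΔdef
  refine ⟨Δ, ?_, ?_⟩
  · intro s hs
    exact analyticAt_clm_comp analyticAt_const (analyticAt_clm_comp (hΩan s hs) analyticAt_const)
  · intro s hs
    obtain ⟨hcomp1, hcomp2⟩ := hΩinv s hs
    have h1' : ∀ z, Ω s (Θ s z) = z := by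
      intro z
      have := congrArg (fun T => T z) hcomp2
      simpa using this
    have h2' : ∀ w, Θ s (Ω s w) = w := by
      intro w
      have := congrArg (fun T => T w) hcomp1
      simpa using this
    have := block_iff (P s) M.subtypeL π (Θ s) (Ω s) (fun x m => hΘapp s x m) h1' h2'
    rw [this]
    have hfun : (fun ν : N => (Ω s (0, ν)).2) = ⇑(Δ s) := by
      funext ν
      simp [Δ]
    rw [hfun]
private lemma det_lemma {E F : Type*}
    [NormedAddCommGroup E] [NormedSpace ℂ E]
    [NormedAddCommGroup F] [NormedSpace ℂ F] {n : ℕ} {V : Set (Fin n → ℂ)}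
    {N : Submodule ℂ E} {M : Submodule ℂ F} [FiniteDimensional ℂ N] [FiniteDimensional ℂ M]
    {Δ : (Fin n → ℂ) → (N →L[ℂ] M)} (hΔ : AnalyticOnNhd ℂ Δ V)
    {s₃ : Fin n → ℂ} (hs₃ : s₃ ∈ V) (hb : Function.Bijective (Δ s₃)) :
    ∃ f : (Fin n → ℂ) → ℂ, AnalyticOnNhd ℂ f V ∧ f s₃ ≠ 0 ∧
      ∀ s ∈ V, (f s = 0 ↔ ¬ Function.Bijective (Δ s)) := by
  classical
  have hb' : Function.Bijective ((Δ s₃ : N →ₗ[ℂ] M)) := by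
    rwa [ContinuousLinearMap.coe_coe]
  let e : M ≃ₗ[ℂ] N := (LinearEquiv.ofBijective _ hb').symm
  let g : (N →L[ℂ] M) → ℂ := fun T => LinearMap.det (e.toLinearMap ∘ₗ (T : N →ₗ[ℂ] M))
  have key : ∀ T : N →L[ℂ] M, Function.Bijective T ↔ g T ≠ 0 := by
    intro T
    set G := e.toLinearMap ∘ₗ (T : N →ₗ[ℂ] M) with hG
    have hco : ⇑G = ⇑e ∘ ⇑T := by
      rw [hG, LinearMap.coe_comp, ContinuousLinearMap.coe_coe, LinearEquiv.coe_coe]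
    constructor
    · intro hT
      have hbij : Function.Bijective G := by rw [hco]; exact e.bijective.comp hT
      have := LinearMap.isUnit_det G ((Module.End.isUnit_iff G).mpr hbij)
      exact this.ne_zero
    · intro hg
      have h5 : ((LinearMap.equivOfDetNeZero G hg : N ≃ₗ[ℂ] N) : N →ₗ[ℂ] N) = G :=
        LinearEquiv.coe_ofIsUnitDet _
      have h6 : Function.Bijective ⇑G := by
        rw [← h5]
        exact (LinearMap.equivOfDetNeZero G hg).bijective
      rw [hco] at h6
      exact (Function.Bijective.of_comp_iff' e.bijective ⇑T).mp h6
  set k := Module.finrank ℂ N with hk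
  let b : Module.Basis (Fin k) ℂ N := Module.finBasis ℂ N
  have hgT : ∀ T : N →L[ℂ] M, g T = ∑ σ : Equiv.Perm (Fin k),
      ((Equiv.Perm.sign σ : ℤ) : ℂ) * ∏ i, (b.repr (e (T (b i)))) (σ i) := by
    intro T
    have : g T = LinearMap.det (e.toLinearMap ∘ₗ (T : N →ₗ[ℂ] M)) := rfl
    rw [this, ← LinearMap.det_toMatrix b, Matrix.det_apply']
    refine Finset.sum_congr rfl fun σ _ => ?_
    congr 1
    refine Finset.prod_congr rfl fun i _ => ?_
    rw [LinearMap.toMatrix_apply]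
    rfl
  refine ⟨fun s => g (Δ s), ?_, (key _).mp hb, ?_⟩
  · intro s hs
    have heq : (fun s => g (Δ s)) = fun s => ∑ σ : Equiv.Perm (Fin k),
        ((Equiv.Perm.sign σ : ℤ) : ℂ) * ∏ i, (b.repr (e (Δ s (b i)))) (σ i) :=
      funext fun s => hgT (Δ s)
    rw [heq]
    apply Finset.analyticAt_fun_sum
    intro σ _
    apply AnalyticAt.mul analyticAt_const
    apply Finset.analyticAt_fun_prod
    intro i _
    let ψ : M →ₗ[ℂ] ℂ := (Finsupp.lapply (σ i)).comp (b.repr.toLinearMap.comp e.toLinearMap)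
    let Φ : (N →L[ℂ] M) →L[ℂ] ℂ :=
      (LinearMap.toContinuousLinearMap ψ).comp (ContinuousLinearMap.apply ℂ M (b i))
    have heq2 : (fun s => (b.repr (e (Δ s (b i)))) (σ i)) = fun s => Φ (Δ s) := rfl
    rw [heq2]
    exact (Φ.analyticAt _).comp (hΔ s hs)
  · intro s hs
    constructor
    · intro h0 hbij
      exact (key _).mp hbij h0
    · intro h
      by_contra h0
      exact h ((key _).mpr h0)
/-- Multivariable analytic Fredholm theorem, part I.  Let `P : U → L(E, F)` be an
analytic family of Fredholm operators on a nonempty connected open set `U ⊆ ℂⁿ`,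
invertible at some point `s₀ ∈ U`, and let `S` be the set of points of `U` where `P`
is not bijective.  Then: (1) `S` is closed in `U` and has empty interior;
(2) locally `S` is the zero set of a non-identically-vanishing holomorphic function
(a complex analytic variety of codimension 1); (3) `s ↦ P(s)⁻¹` is analytic on `U ∖ S`. -/
theorem stmt6 {E F : Type*}
    [NormedAddCommGroup E] [NormedSpace ℂ E] [CompleteSpace E]
    [NormedAddCommGroup F] [NormedSpace ℂ F] [CompleteSpace F]
    {n : ℕ} (hn : 1 ≤ n)
    (U : Set (Fin n → ℂ)) (hUopen : IsOpen U) (hUne : U.Nonempty)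
    (hUconn : IsConnected U)
    (P : (Fin n → ℂ) → (E →L[ℂ] F)) (hP : AnalyticOnNhd ℂ P U)
    (hFred : ∀ s ∈ U, FiniteDimensional ℂ (LinearMap.ker (P s : E →ₗ[ℂ] F)) ∧
        IsClosed ((LinearMap.range (P s : E →ₗ[ℂ] F) : Submodule ℂ F) : Set F) ∧
        FiniteDimensional ℂ (F ⧸ LinearMap.range (P s : E →ₗ[ℂ] F)))
    (s₀ : Fin n → ℂ) (hs₀ : s₀ ∈ U) (hbij : Function.Bijective (P s₀)) :
    (∃ T : Set (Fin n → ℂ), IsClosed T ∧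
        {s ∈ U | ¬ Function.Bijective (P s)} = T ∩ U) ∧
    interior {s ∈ U | ¬ Function.Bijective (P s)} = ∅ ∧
    (∀ s₁ ∈ U, ∃ V : Set (Fin n → ℂ), IsOpen V ∧ s₁ ∈ V ∧ V ⊆ U ∧
        ∃ f : (Fin n → ℂ) → ℂ, AnalyticOnNhd ℂ f V ∧ (∃ s ∈ V, f s ≠ 0) ∧
          {s ∈ U | ¬ Function.Bijective (P s)} ∩ V = {s ∈ V | f s = 0}) ∧
    (∃ Q : (Fin n → ℂ) → (F →L[ℂ] E),
        AnalyticOnNhd ℂ Q (U \ {s ∈ U | ¬ Function.Bijective (P s)}) ∧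
        ∀ s ∈ U \ {s ∈ U | ¬ Function.Bijective (P s)},
          (P s).comp (Q s) = ContinuousLinearMap.id ℂ F ∧
          (Q s).comp (P s) = ContinuousLinearMap.id ℂ E) := by
  classical
  set S := {s ∈ U | ¬ Function.Bijective (P s)} with hSdef
  set O := {s | s ∈ U ∧ Function.Bijective (P s)} with hOdef
  have hOopen : IsOpen O := by
    rw [isOpen_iff_mem_nhds]
    rintro s ⟨hsU, hsbij⟩
    obtain ⟨r, hr, hballU, Ω, hΩan, hΩinv⟩ := local_inverse hUopen hP hsU hsbij
    refine Filter.mem_of_superset (Metric.ball_mem_nhds s hr) ?_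
    intro t ht
    obtain ⟨h1, h2⟩ := hΩinv t ht
    refine ⟨hballU ht, ?_, ?_⟩
    · intro a b hab
      have := congrArg (Ω t) hab
      rwa [← ContinuousLinearMap.comp_apply, ← ContinuousLinearMap.comp_apply, h2,
        ContinuousLinearMap.id_apply, ContinuousLinearMap.id_apply] at this
    · intro y
      refine ⟨Ω t y, ?_⟩
      have : (P t) (Ω t y) = ((P t).comp (Ω t)) y := rfl
      rw [this, h1, ContinuousLinearMap.id_apply]
  have hSO : S = Oᶜ ∩ U := by
    ext s
    simp only [hSdef, hOdef, mem_sep_iff, mem_inter_iff, mem_compl_iff, mem_setOf_eq]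
    tauto
  have hkey : ∀ s₁ ∈ U, s₁ ∈ closure O → ∃ V, IsOpen V ∧ s₁ ∈ V ∧ V ⊆ U ∧
      V ⊆ closure O ∧ ∃ f : (Fin n → ℂ) → ℂ, AnalyticOnNhd ℂ f V ∧ (∃ s ∈ V, f s ≠ 0) ∧
        ∀ s ∈ V, (f s = 0 ↔ ¬ Function.Bijective (P s)) := by
    intro s₁ hs₁U hs₁cl
    obtain ⟨h1, -, h2⟩ := hFred s₁ hs₁U
    obtain ⟨V, hVopen, hs₁V, hVU, hVpre, N, M, hN, hM, Δ, hΔan, hΔiff⟩ :=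
      core_lemma hUopen hP hs₁U h1 h2
    haveI := hN; haveI := hM
    obtain ⟨s₃, hs₃V, hs₃O⟩ : ∃ s₃ ∈ V, s₃ ∈ O := by
      obtain ⟨t, ht1, ht2⟩ := _root_.mem_closure_iff.mp hs₁cl V hVopen hs₁V
      exact ⟨t, ht1, ht2⟩
    have hΔbij : Function.Bijective (Δ s₃) := (hΔiff s₃ hs₃V).mp hs₃O.2
    obtain ⟨f, hfan, hf3, hfiff⟩ := det_lemma hΔan hs₃V hΔbij
    have hiff : ∀ s ∈ V, (f s = 0 ↔ ¬ Function.Bijective (P s)) := by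
      intro s hs
      rw [hfiff s hs, hΔiff s hs]
    refine ⟨V, hVopen, hs₁V, hVU, ?_, f, hfan, ⟨s₃, hs₃V, hf3⟩, hiff⟩
    intro v hv
    rw [_root_.mem_closure_iff]
    intro W hWopen hvW
    by_contra hemp
    have hzero : EqOn f 0 (W ∩ V) := by
      rintro w ⟨hwW, hwV⟩
      have hnb : ¬ Function.Bijective (P w) := by
        intro hbw
        exact hemp ⟨w, hwW, hVU hwV, hbw⟩
      exact (hiff w hwV).mpr hnb
    have hEq : EqOn f 0 V := by
      apply hfan.eqOn_zero_of_preconnected_of_eventuallyEq_zero hVpre hv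
      exact Filter.eventuallyEq_of_mem ((hWopen.inter hVopen).mem_nhds ⟨hvW, hv⟩) hzero
    exact hf3 (hEq hs₃V)
  have hAopen : IsOpen (U ∩ closure O) := by
    rw [isOpen_iff_mem_nhds]
    rintro s₁ ⟨hs₁U, hs₁cl⟩
    obtain ⟨V, hVopen, hs₁V, hVU, hVcl, -⟩ := hkey s₁ hs₁U hs₁cl
    exact Filter.mem_of_superset (hVopen.mem_nhds hs₁V) fun t ht => ⟨hVU ht, hVcl ht⟩
  have hUsub : U ⊆ closure O := by
    by_contra hno
    obtain ⟨x, hxU, hxcl⟩ := not_subset.mp hno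
    have hs₀O : s₀ ∈ O := ⟨hs₀, hbij⟩
    have h1' : (U ∩ (U ∩ closure O)).Nonempty := ⟨s₀, hs₀, hs₀, subset_closure hs₀O⟩
    have h2' : (U ∩ (closure O)ᶜ).Nonempty := ⟨x, hxU, hxcl⟩
    have hsub : U ⊆ (U ∩ closure O) ∪ (closure O)ᶜ := fun s hs =>
      (em (s ∈ closure O)).elim (fun h => Or.inl ⟨hs, h⟩) Or.inr
    obtain ⟨y, -, ⟨-, hy1⟩, hy2⟩ := hUconn.isPreconnected _ _ hAopen
      isClosed_closure.isOpen_compl hsub h1' h2'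
    exact hy2 hy1
  refine ⟨⟨Oᶜ, hOopen.isClosed_compl, hSO⟩, ?_, ?_, ?_⟩
  · by_contra hne
    rw [← ne_eq, ← nonempty_iff_ne_empty] at hne
    obtain ⟨x, hx⟩ := hne
    have hxS : x ∈ S := interior_subset hx
    obtain ⟨y, hyint, hyO⟩ := _root_.mem_closure_iff.mp (hUsub hxS.1) (interior S) isOpen_interior hx
    exact (interior_subset hyint).2 hyO.2
  · intro s₁ hs₁
    obtain ⟨V, hVopen, hs₁V, hVU, -, f, hfan, hfne, hfiff⟩ := hkey s₁ hs₁ (hUsub hs₁)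
    refine ⟨V, hVopen, hs₁V, hVU, f, hfan, hfne, ?_⟩
    ext s
    simp only [hSdef, mem_inter_iff, mem_sep_iff, mem_setOf_eq]
    constructor
    · rintro ⟨⟨hsU, hsnb⟩, hsV⟩
      exact ⟨hsV, (hfiff s hsV).mpr hsnb⟩
    · rintro ⟨hsV, hf0⟩
      exact ⟨⟨hVU hsV, (hfiff s hsV).mp hf0⟩, hsV⟩
  · have hUS : U \ S = O := by
      ext s
      simp only [hSdef, hOdef, mem_diff, mem_sep_iff, mem_setOf_eq]
      tauto
    refine ⟨fun s => (P s).inverse, ?_, ?_⟩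
    · rw [hUS]
      rintro s ⟨hsU, hsbij⟩
      obtain ⟨r, hr, hballU, Ω, hΩan, hΩinv⟩ := local_inverse hUopen hP hsU hsbij
      have hev : (fun t => Ω t) =ᶠ[nhds s] fun t => (P t).inverse := by
        filter_upwards [Metric.ball_mem_nhds s hr] with t ht
        obtain ⟨ht1, ht2⟩ := hΩinv t ht
        exact (ContinuousLinearMap.inverse_eq ht1 ht2).symm
      exact (hΩan s (mem_ball_self hr)).congr hev
    · rw [hUS]
      rintro s ⟨hsU, hsbij⟩
      have hker : LinearMap.ker (P s : E →ₗ[ℂ] F) = ⊥ := LinearMap.ker_eq_bot.mpr hsbij.1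
      have hrg : LinearMap.range (P s : E →ₗ[ℂ] F) = ⊤ := LinearMap.range_eq_top.mpr hsbij.2
      set e := ContinuousLinearEquiv.ofBijective (P s) hker hrg with hedef
      have hPe : P s = (e : E →L[ℂ] F) := by ext z; rfl
      constructor
      · show (P s).comp ((P s).inverse) = ContinuousLinearMap.id ℂ F
        rw [hPe, ContinuousLinearMap.inverse_equiv]
        ext z
        simp
      · show ((P s).inverse).comp (P s) = ContinuousLinearMap.id ℂ E
        rw [hPe, ContinuousLinearMap.inverse_equiv]
        ext z
        simp
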